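/- Any circle centered at a point c ∈ (−∞,0] ∪ [1,∞) intersects a Cassini oval {w ∈ ℂ : |w|^a |1−w|^b = K} (with a, b > 0, K > 0) in at most two points. -/

import Mathlib

private lemma circle_eq_aux {c R : ℝ} {w : ℂ} (h : ‖w - (c : ℂ)‖ = R) :
    (w.re - c) ^ 2 + w.im ^ 2 = R ^ 2 := by
  have h2 : ‖w - (c : ℂ)‖ ^ 2 = R ^ 2 := by rw [h]
  rw [Complex.sq_norm, Complex.normSq_apply] at h2
  simp only [Complex.sub_re, Complex.sub_im, Complex.ofReal_re, Complex.ofReal_im] at h2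
  nlinarith [h2]

private lemma circle_sq_abs {c R : ℝ} {w : ℂ} (h : ‖w - (c : ℂ)‖ = R) :
    ‖w‖ ^ 2 = R ^ 2 - c ^ 2 + 2 * c * w.re ∧
    ‖1 - w‖ ^ 2 = 1 + R ^ 2 - c ^ 2 + 2 * (c - 1) * w.re := by
  have h2 := circle_eq_aux h
  constructor
  · rw [Complex.sq_norm, Complex.normSq_apply]; nlinarith
  · rw [Complex.sq_norm, Complex.normSq_apply]
    simp only [Complex.sub_re, Complex.sub_im, Complex.one_re, Complex.one_im]
    nlinarith

private lemma abs_pos_of_cassini {a b K : ℝ} (ha : 0 < a) (hb : 0 < b) (hK : 0 < K)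
    {w : ℂ} (h : ‖w‖ ^ a * ‖1 - w‖ ^ b = K) :
    0 < ‖w‖ ∧ 0 < ‖1 - w‖ := by
  constructor
  · rcases (norm_nonneg w).lt_or_eq with hp | hp
    · exact hp
    · exfalso
      rw [← hp, Real.zero_rpow ha.ne', zero_mul] at h
      exact hK.ne' h.symm
  · rcases (norm_nonneg (1 - w)).lt_or_eq with hp | hp
    · exact hp
    · exfalso
      rw [← hp, Real.zero_rpow hb.ne', mul_zero] at h
      exact hK.ne' h.symm

private lemma cassini_re_lt_false (a b K R c : ℝ) (ha : 0 < a) (hb : 0 < b) (hK : 0 < K)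
    (hc : c ≤ 0 ∨ 1 ≤ c) (w₁ w₂ : ℂ)
    (h₁ : ‖w₁‖ ^ a * ‖1 - w₁‖ ^ b = K ∧ ‖w₁ - (c : ℂ)‖ = R)
    (h₂ : ‖w₂‖ ^ a * ‖1 - w₂‖ ^ b = K ∧ ‖w₂ - (c : ℂ)‖ = R)
    (hlt : w₁.re < w₂.re) : False := by
  obtain ⟨s1, t1⟩ := circle_sq_abs h₁.2
  obtain ⟨s2, t2⟩ := circle_sq_abs h₂.2
  obtain ⟨p1, q1⟩ := abs_pos_of_cassini ha hb hK h₁.1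
  obtain ⟨p2, q2⟩ := abs_pos_of_cassini ha hb hK h₂.1
  rcases hc with hc | hc
  · -- c ≤ 0 : both |w| and |1-w| (weakly/strictly) decrease in Re w
    have hs : ‖w₂‖ ≤ ‖w₁‖ := by
      have hsq : ‖w₂‖ ^ 2 ≤ ‖w₁‖ ^ 2 := by
        rw [s1, s2]; nlinarith
      exact (pow_le_pow_iff_left₀ (norm_nonneg _) (norm_nonneg _)
        two_ne_zero).mp hsq
    have ht : ‖1 - w₂‖ < ‖1 - w₁‖ := by
      have hsq : ‖1 - w₂‖ ^ 2 < ‖1 - w₁‖ ^ 2 := by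
        rw [t1, t2]; nlinarith
      exact (pow_lt_pow_iff_left₀ (norm_nonneg _) (norm_nonneg _)
        two_ne_zero).mp hsq
    have A : ‖w₂‖ ^ a ≤ ‖w₁‖ ^ a :=
      Real.rpow_le_rpow (norm_nonneg _) hs ha.le
    have B : ‖1 - w₂‖ ^ b < ‖1 - w₁‖ ^ b :=
      Real.rpow_lt_rpow (norm_nonneg _) ht hb
    have key : ‖w₂‖ ^ a * ‖1 - w₂‖ ^ b <
        ‖w₁‖ ^ a * ‖1 - w₁‖ ^ b :=
      mul_lt_mul' A B (Real.rpow_nonneg (norm_nonneg _) b)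
        (Real.rpow_pos_of_pos p1 a)
    rw [h₁.1, h₂.1] at key
    exact lt_irrefl K key
  · -- 1 ≤ c : both increase in Re w
    have hs : ‖w₁‖ < ‖w₂‖ := by
      have hsq : ‖w₁‖ ^ 2 < ‖w₂‖ ^ 2 := by
        rw [s1, s2]; nlinarith
      exact (pow_lt_pow_iff_left₀ (norm_nonneg _) (norm_nonneg _)
        two_ne_zero).mp hsq
    have ht : ‖1 - w₁‖ ≤ ‖1 - w₂‖ := by
      have hsq : ‖1 - w₁‖ ^ 2 ≤ ‖1 - w₂‖ ^ 2 := by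
        rw [t1, t2]; nlinarith
      exact (pow_le_pow_iff_left₀ (norm_nonneg _) (norm_nonneg _)
        two_ne_zero).mp hsq
    have A : ‖w₁‖ ^ a < ‖w₂‖ ^ a :=
      Real.rpow_lt_rpow (norm_nonneg _) hs ha
    have B : ‖1 - w₁‖ ^ b ≤ ‖1 - w₂‖ ^ b :=
      Real.rpow_le_rpow (norm_nonneg _) ht hb.le
    have key : ‖w₁‖ ^ a * ‖1 - w₁‖ ^ b <
        ‖w₂‖ ^ a * ‖1 - w₂‖ ^ b :=
      mul_lt_mul A B (Real.rpow_pos_of_pos q1 b)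
        (Real.rpow_nonneg (norm_nonneg _) a)
    rw [h₁.1, h₂.1] at key
    exact lt_irrefl K key

private lemma cassini_re_eq (a b K R c : ℝ) (ha : 0 < a) (hb : 0 < b) (hK : 0 < K)
    (hc : c ≤ 0 ∨ 1 ≤ c) (w₁ w₂ : ℂ)
    (h₁ : ‖w₁‖ ^ a * ‖1 - w₁‖ ^ b = K ∧ ‖w₁ - (c : ℂ)‖ = R)
    (h₂ : ‖w₂‖ ^ a * ‖1 - w₂‖ ^ b = K ∧ ‖w₂ - (c : ℂ)‖ = R) :
    w₁.re = w₂.re := by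
  rcases lt_trichotomy w₁.re w₂.re with h | h | h
  · exact absurd h (fun h => cassini_re_lt_false a b K R c ha hb hK hc w₁ w₂ h₁ h₂ h)
  · exact h
  · exact absurd h (fun h => cassini_re_lt_false a b K R c ha hb hK hc w₂ w₁ h₂ h₁ h)

theorem circle_meets_cassini_in_at_most_two_points
    (a b K R : ℝ) (ha : 0 < a) (hb : 0 < b) (hK : 0 < K) (hR : 0 < R)
    (c : ℝ) (hc : c ≤ 0 ∨ 1 ≤ c)
    (w₁ w₂ w₃ : ℂ)
    (h₁ : ‖w₁‖ ^ a * ‖1 - w₁‖ ^ b = K ∧ ‖w₁ - (c : ℂ)‖ = R)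
    (h₂ : ‖w₂‖ ^ a * ‖1 - w₂‖ ^ b = K ∧ ‖w₂ - (c : ℂ)‖ = R)
    (h₃ : ‖w₃‖ ^ a * ‖1 - w₃‖ ^ b = K ∧ ‖w₃ - (c : ℂ)‖ = R) :
    w₁ = w₂ ∨ w₁ = w₃ ∨ w₂ = w₃ := by
  have e12 := cassini_re_eq a b K R c ha hb hK hc w₁ w₂ h₁ h₂
  have e13 := cassini_re_eq a b K R c ha hb hK hc w₁ w₃ h₁ h₃
  have c1 := circle_eq_aux h₁.2
  have c2 := circle_eq_aux h₂.2
  have c3 := circle_eq_aux h₃.2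
  rw [e12] at c1
  have i12 : w₁.im ^ 2 = w₂.im ^ 2 := by linarith
  rw [← e12, e13] at c1
  have i13 : w₁.im ^ 2 = w₃.im ^ 2 := by linarith
  have q12 : (w₁.im - w₂.im) * (w₁.im + w₂.im) = 0 := by linear_combination i12
  have q13 : (w₁.im - w₃.im) * (w₁.im + w₃.im) = 0 := by linear_combination i13
  rcases mul_eq_zero.mp q12 with h | h
  · exact Or.inl (Complex.ext e12 (by linarith))
  · rcases mul_eq_zero.mp q13 with h' | h'
    · exact Or.inr (Or.inl (Complex.ext e13 (by linarith)))
    · exact Or.inr (Or.inr (Complex.ext (e12.symm.trans e13) (by linarith)))
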